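/- arXiv:2510.24691 — 5 statements merged into one kernel-verified Lean document; each statement's English description precedes it below -/
import Mathlib

section
/- Let A be an antichain of subsets of a finite set B (no member of A is a proper subset of another member of A), and let φ : 2^B → [0,1] be a function with φ(A) = 0 for every A ∉ A. For p ∈ (0,1), let B_p be a random subset of B including each element independently with probability p. Assume that for all integers 0 ≤ M ≤ N, C(N,M) p^M (1-p)^{N-M} ≤ M^M/(e^M M!) + p. Then E[φ(B_p)] ≤ max_{A ∈ A} (|A|^{|A|}/(e^{|A|} |A|!) · φ(A)) + p. -/
open Finset

/-- LYM inequality for a fintype, stated as a sum over the antichain. -/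
private lemma blym_fintype {β : Type*} [DecidableEq β] [Fintype β] (𝒜 : Finset (Finset β))
    (h𝒜 : IsAntichain (· ⊆ ·) (𝒜 : Set (Finset β))) :
    ∑ A ∈ 𝒜, ((Fintype.card β).choose A.card : ℝ)⁻¹ ≤ 1 := by
  classical
  have h := Finset.sum_card_slice_div_choose_le_one (𝕜 := ℝ) h𝒜
  refine le_trans (le_of_eq ?_) h
  rw [← Finset.sum_fiberwise_of_maps_to (g := fun A : Finset β => A.card)
      (t := range (Fintype.card β + 1))
      (fun A _ => mem_range.2 (Nat.lt_succ_of_le (card_le_univ A)))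
      (fun A => ((Fintype.card β).choose A.card : ℝ)⁻¹)]
  refine sum_congr rfl fun r _ => ?_
  have : ∀ A ∈ 𝒜.filter (fun A => A.card = r),
      ((Fintype.card β).choose A.card : ℝ)⁻¹ = ((Fintype.card β).choose r : ℝ)⁻¹ := by
    intro A hA
    rw [(mem_filter.1 hA).2]
  rw [sum_congr rfl this, sum_const, nsmul_eq_mul]
  rw [Finset.slice, div_eq_mul_inv]

/-- LYM inequality relative to an ambient finset `B`. -/
private lemma blym_finset {α : Type*} [DecidableEq α] (B : Finset α) (𝒜 : Finset (Finset α))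
    (h𝒜B : ∀ A ∈ 𝒜, A ⊆ B) (h𝒜 : IsAntichain (· ⊆ ·) (𝒜 : Set (Finset α))) :
    ∑ A ∈ 𝒜, ((B.card.choose A.card : ℝ))⁻¹ ≤ 1 := by
  classical
  set ι : Finset α → Finset {x // x ∈ B} := fun A => A.subtype (· ∈ B) with hι
  have hmap : ∀ A ∈ 𝒜, (ι A).map (Function.Embedding.subtype _) = A := fun A hA =>
    Finset.subtype_map_of_mem (fun a ha => h𝒜B A hA ha)
  have hcard : ∀ A ∈ 𝒜, (ι A).card = A.card := by
    intro A hA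
    have := congrArg Finset.card (hmap A hA)
    simpa using this
  have hinj : Set.InjOn ι 𝒜 := by
    intro A₁ h1 A₂ h2 heq
    rw [← hmap A₁ h1, ← hmap A₂ h2, heq]
  have hanti : IsAntichain (· ⊆ ·) ((𝒜.image ι : Finset (Finset {x // x ∈ B})) :
      Set (Finset {x // x ∈ B})) := by
    rintro X h1 Y h2 hne hsub
    simp only [coe_image, Set.mem_image, mem_coe] at h1 h2
    obtain ⟨A₁, hA₁, rfl⟩ := h1
    obtain ⟨A₂, hA₂, rfl⟩ := h2
    have hsub' : A₁ ⊆ A₂ := by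
      rw [← hmap A₁ hA₁, ← hmap A₂ hA₂]
      exact Finset.map_subset_map.2 hsub
    exact h𝒜 hA₁ hA₂ (fun h => hne (by rw [h])) hsub'
  have h := blym_fintype (𝒜.image ι) hanti
  rw [Finset.sum_image (fun a ha b hb hab => hinj ha hb hab)] at h
  have hN : Fintype.card {x // x ∈ B} = B.card := Fintype.card_coe B
  calc ∑ A ∈ 𝒜, ((B.card.choose A.card : ℝ))⁻¹
      = ∑ A ∈ 𝒜, ((Fintype.card {x // x ∈ B}).choose (ι A).card : ℝ)⁻¹ := by
        refine sum_congr rfl fun A hA => ?_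
        rw [hN, hcard A hA]
    _ ≤ 1 := h

/-- if `𝒜` is an antichain of subsets of a finite set `B`, `φ : 2^B → [0,1]`
vanishes outside `𝒜`, and the binomial/Poisson-type bound
`C(N,M) p^M (1-p)^{N-M} ≤ M^M/(e^M M!) + p` holds, then the expectation of `φ` at a
`p`-random subset of `B` is at most `max_{A ∈ 𝒜} (|A|^{|A|}/(e^{|A|}|A|!)) φ(A) + p`. -/
theorem antichain_expectation {α : Type*} [DecidableEq α] (B : Finset α)
    (𝒜 : Finset (Finset α)) (h𝒜ne : 𝒜.Nonempty)
    (h𝒜B : ∀ A ∈ 𝒜, A ⊆ B)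
    (h𝒜 : IsAntichain (· ⊆ ·) (𝒜 : Set (Finset α)))
    (φ : Finset α → ℝ) (hφ0 : ∀ A, 0 ≤ φ A) (hφ1 : ∀ A, φ A ≤ 1)
    (hφsupp : ∀ A, A ∉ 𝒜 → φ A = 0)
    (p : ℝ) (hp : 0 < p) (hp1 : p < 1)
    (hbin : ∀ M N : ℕ, M ≤ N →
      (N.choose M : ℝ) * p ^ M * (1 - p) ^ (N - M) ≤
        (M : ℝ) ^ M / (Real.exp M * (Nat.factorial M)) + p) :
    ∑ A ∈ B.powerset, p ^ A.card * (1 - p) ^ (B.card - A.card) * φ A ≤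
      𝒜.sup' h𝒜ne (fun A => (A.card : ℝ) ^ A.card /
        (Real.exp A.card * (Nat.factorial A.card)) * φ A) + p := by
  classical
  set N := B.card with hN
  set S := 𝒜.sup' h𝒜ne (fun A => (A.card : ℝ) ^ A.card /
      (Real.exp A.card * (Nat.factorial A.card)) * φ A) with hS
  obtain ⟨A₀, hA₀⟩ := h𝒜ne
  have hS0 : 0 ≤ S := by
    refine le_trans ?_ (Finset.le_sup' _ hA₀)
    have h1 : (0:ℝ) ≤ (A₀.card : ℝ) ^ A₀.card / (Real.exp A₀.card * (Nat.factorial A₀.card)) :=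
      div_nonneg (by positivity) (by positivity)
    exact mul_nonneg h1 (hφ0 A₀)
  have hsum_eq : ∑ A ∈ B.powerset, p ^ A.card * (1 - p) ^ (N - A.card) * φ A
      = ∑ A ∈ 𝒜, p ^ A.card * (1 - p) ^ (N - A.card) * φ A := by
    refine (Finset.sum_subset (fun A hA => Finset.mem_powerset.2 (h𝒜B A hA)) ?_).symm
    intro A _ hnA
    rw [hφsupp A hnA, mul_zero]
  rw [hsum_eq]
  have hq : (0:ℝ) < 1 - p := by linarith
  have key : ∀ A ∈ 𝒜, p ^ A.card * (1 - p) ^ (N - A.card) * φ A ≤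
      ((N.choose A.card : ℝ))⁻¹ * (S + p) := by
    intro A hA
    have haN : A.card ≤ N := Finset.card_le_card (h𝒜B A hA)
    have hc : (0:ℝ) < (N.choose A.card : ℝ) := by
      exact_mod_cast Nat.choose_pos haN
    have h1 : p ^ A.card * (1 - p) ^ (N - A.card) * φ A
        = (N.choose A.card : ℝ)⁻¹ *
          (((N.choose A.card : ℝ) * p ^ A.card * (1 - p) ^ (N - A.card)) * φ A) := by
      field_simp
    rw [h1]
    refine mul_le_mul_of_nonneg_left ?_ (by positivity)
    have h2 : ((N.choose A.card : ℝ) * p ^ A.card * (1 - p) ^ (N - A.card)) * φ A ≤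
        ((A.card : ℝ) ^ A.card / (Real.exp A.card * (Nat.factorial A.card)) + p) * φ A :=
      mul_le_mul_of_nonneg_right (hbin A.card N haN) (hφ0 A)
    refine h2.trans ?_
    rw [add_mul]
    have h3 : (A.card : ℝ) ^ A.card / (Real.exp A.card * (Nat.factorial A.card)) * φ A ≤ S := by
      rw [hS]
      exact Finset.le_sup' (fun A => (A.card : ℝ) ^ A.card /
        (Real.exp A.card * (Nat.factorial A.card)) * φ A) hA
    have h4 : p * φ A ≤ p := by
      nlinarith [hφ1 A, hφ0 A]
    linarith
  calc ∑ A ∈ 𝒜, p ^ A.card * (1 - p) ^ (N - A.card) * φ A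
      ≤ ∑ A ∈ 𝒜, ((N.choose A.card : ℝ))⁻¹ * (S + p) := Finset.sum_le_sum key
    _ = (∑ A ∈ 𝒜, ((N.choose A.card : ℝ))⁻¹) * (S + p) := by rw [← Finset.sum_mul]
    _ ≤ 1 * (S + p) := by
        refine mul_le_mul_of_nonneg_right (blym_finset B 𝒜 h𝒜B h𝒜) (by linarith)
    _ = S + p := one_mul _
end

section
/- Let f be a polynomial in variables x_1,…,x_s with non-negative real coefficients such that at least m of the monomials x_1,…,x_m (degree-1 terms) appear in f with strictly positive coefficient. Let ξ_1,…,ξ_s be independent Bernoulli(p) random variables with p ∈ (0,1). Then for every real ℓ, P[f(ξ_1,…,ξ_s) = ℓ] ≤ binmax(m,p), where binmax(m,p) = max over 0 ≤ m₀ ≤ m of C(m,m₀) p^{m₀}(1-p)^{m-m₀}. -/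
open Finset

/-- `binmax m p` is the maximum over `0 ≤ m₀ ≤ m` of `C(m,m₀) p^{m₀} (1-p)^{m-m₀}`. -/
noncomputable def binmax (m : ℕ) (p : ℝ) : ℝ :=
  (Finset.range (m + 1)).sup' ⟨0, Finset.mem_range.2 (Nat.succ_pos m)⟩
    (fun m₀ => (m.choose m₀ : ℝ) * p ^ m₀ * (1 - p) ^ (m - m₀))

lemma binmax_nonneg (m : ℕ) (p : ℝ) (hp : 0 < p) (hp1 : p < 1) : 0 ≤ binmax m p := by
  have h0 : (0:ℕ) ∈ Finset.range (m+1) := Finset.mem_range.2 (Nat.succ_pos m)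
  refine le_trans ?_ (Finset.le_sup' _ h0)
  have : (0:ℝ) < 1 - p := by linarith
  positivity

lemma le_binmax (m r : ℕ) (hr : r ∈ Finset.range (m+1)) (p : ℝ) :
    (m.choose r : ℝ) * p ^ r * (1 - p) ^ (m - r) ≤ binmax m p :=
  Finset.le_sup' (fun m₀ => (m.choose m₀ : ℝ) * p ^ m₀ * (1 - p) ^ (m - m₀)) hr

/-- Evaluation of a polynomial at a 0/1 indicator vector. -/
lemma eval_indicator {s : ℕ} (f : MvPolynomial (Fin s) ℝ) (S : Finset (Fin s)) :
    MvPolynomial.eval (fun i => if i ∈ S then (1:ℝ) else 0) f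
      = ∑ d ∈ f.support, f.coeff d * (if d.support ⊆ S then 1 else 0) := by
  rw [MvPolynomial.eval_eq]
  refine Finset.sum_congr rfl fun d _ => ?_
  congr 1
  by_cases h : d.support ⊆ S
  · rw [if_pos h]
    apply Finset.prod_eq_one
    intro i hi
    rw [if_pos (h hi), one_pow]
  · rw [if_neg h]
    obtain ⟨i, hi, hiS⟩ := Finset.not_subset.1 h
    refine Finset.prod_eq_zero hi ?_
    rw [if_neg hiS]
    exact zero_pow (Finsupp.mem_support_iff.1 hi)

/-- Strict monotonicity in the first `m` coordinates. -/
lemma eval_strict_lt {s m : ℕ} (f : MvPolynomial (Fin s) ℝ)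
    (hcoeff : ∀ d, 0 ≤ f.coeff d)
    (hlin : ∀ i : Fin s, (i : ℕ) < m → 0 < f.coeff (Finsupp.single i 1))
    {S S' : Finset (Fin s)} (hSS : S ⊆ S') {i : Fin s} (him : (i : ℕ) < m)
    (hi' : i ∈ S') (hi : i ∉ S) :
    MvPolynomial.eval (fun j => if j ∈ S then (1:ℝ) else 0) f
      < MvPolynomial.eval (fun j => if j ∈ S' then (1:ℝ) else 0) f := by
  rw [eval_indicator, eval_indicator]
  refine Finset.sum_lt_sum (fun d _ => ?_) ?_
  · refine mul_le_mul_of_nonneg_left ?_ (hcoeff d)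
    by_cases h : d.support ⊆ S
    · rw [if_pos h, if_pos (h.trans hSS)]
    · rw [if_neg h]
      split <;> norm_num
  · refine ⟨Finsupp.single i 1, MvPolynomial.mem_support_iff.2 (hlin i him).ne', ?_⟩
    rw [Finsupp.support_single_ne_zero _ one_ne_zero]
    rw [if_neg (by simpa using hi), if_pos (by simpa using hi')]
    have := hlin i him
    nlinarith

/-- Weighted LYM inequality. -/
lemma weighted_lym (m : ℕ) (p : ℝ) (hp : 0 < p) (hp1 : p < 1)
    (𝒜 : Finset (Finset (Fin m)))
    (h𝒜 : IsAntichain (· ⊆ ·) (𝒜 : Set (Finset (Fin m)))) :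
    ∑ T ∈ 𝒜, p ^ T.card * (1 - p) ^ (m - T.card) ≤ binmax m p := by
  classical
  have hq : (0:ℝ) < 1 - p := by linarith
  have hmaps : ∀ T ∈ 𝒜, T.card ∈ Finset.range (m+1) := by
    intro T _
    simpa [Nat.lt_succ_iff] using (Finset.card_le_univ T).trans_eq (by simp)
  rw [← Finset.sum_fiberwise_of_maps_to hmaps
    (fun T => p ^ T.card * (1 - p) ^ (m - T.card))]
  have hslice : ∀ r ∈ Finset.range (m+1),
      ∑ T ∈ 𝒜.filter (fun T => T.card = r), p ^ T.card * (1 - p) ^ (m - T.card)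
        = ((𝒜 # r).card : ℝ) * (p ^ r * (1 - p) ^ (m - r)) := by
    intro r _
    rw [show (𝒜 # r) = 𝒜.filter (fun T => T.card = r) from rfl]
    rw [Finset.sum_congr rfl (fun T hT => by
      rw [(Finset.mem_filter.1 hT).2])]
    rw [Finset.sum_const, nsmul_eq_mul]
  rw [Finset.sum_congr rfl hslice]
  have key : ∀ r ∈ Finset.range (m+1),
      ((𝒜 # r).card : ℝ) * (p ^ r * (1 - p) ^ (m - r))
        ≤ (((𝒜 # r).card : ℝ) / (m.choose r : ℝ)) * binmax m p := by
    intro r hr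
    have hrm : r ≤ m := Nat.lt_succ_iff.1 (Finset.mem_range.1 hr)
    have hch : (0:ℝ) < (m.choose r : ℝ) := by
      exact_mod_cast Nat.choose_pos hrm
    have h1 : ((𝒜 # r).card : ℝ) * (p ^ r * (1 - p) ^ (m - r))
        = (((𝒜 # r).card : ℝ) / (m.choose r : ℝ))
          * ((m.choose r : ℝ) * p ^ r * (1 - p) ^ (m - r)) := by
      field_simp
    rw [h1]
    refine mul_le_mul_of_nonneg_left (le_binmax m r hr p) ?_
    positivity
  refine (Finset.sum_le_sum key).trans ?_
  rw [← Finset.sum_mul]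
  have hlym : (∑ r ∈ Finset.range (m+1), ((𝒜 # r).card : ℝ) / (m.choose r : ℝ)) ≤ 1 := by
    have := Finset.sum_card_slice_div_choose_le_one (𝕜 := ℝ) (𝒜 := 𝒜) h𝒜
    simpa using this
  calc (∑ r ∈ Finset.range (m+1), ((𝒜 # r).card : ℝ) / (m.choose r : ℝ)) * binmax m p
      ≤ 1 * binmax m p := by
        refine mul_le_mul_of_nonneg_right hlym (binmax_nonneg m p hp hp1)
    _ = binmax m p := one_mul _

/-- for a polynomial `f` in `s` variables with non-negative coefficients in which
each of the monomials `x₁, …, x_m` appears with strictly positive coefficient, the probability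
that `f` of independent Bernoulli(p) variables equals any given `ℓ` is at most `binmax(m,p)`. -/
theorem large_linear_part (s m : ℕ) (hms : m ≤ s) (f : MvPolynomial (Fin s) ℝ)
    (hcoeff : ∀ d, 0 ≤ f.coeff d)
    (hlin : ∀ i : Fin s, (i : ℕ) < m → 0 < f.coeff (Finsupp.single i 1))
    (p : ℝ) (hp : 0 < p) (hp1 : p < 1) (ℓ : ℝ) :
    ∑ S ∈ (Finset.univ : Finset (Fin s)).powerset,
      p ^ S.card * (1 - p) ^ (s - S.card) *
        (if MvPolynomial.eval (fun i => if i ∈ S then (1 : ℝ) else 0) f = ℓ then 1 else 0) ≤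
      binmax m p := by
  classical
  have hq : (0:ℝ) < 1 - p := by linarith
  set e : Fin m ↪ Fin s := ⟨Fin.castLE hms, Fin.castLE_injective hms⟩ with he
  have hmemA : ∀ i : Fin s, i ∈ (Finset.univ : Finset (Fin m)).map e ↔ (i : ℕ) < m := by
    intro i
    simp only [Finset.mem_map, Finset.mem_univ, true_and]
    constructor
    · rintro ⟨j, rfl⟩; exact j.2
    · intro h; exact ⟨⟨(i : ℕ), h⟩, Fin.ext rfl⟩
  set A : Finset (Fin s) := (Finset.univ : Finset (Fin m)).map e with hA
  set B : Finset (Fin s) := Aᶜ with hB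
  have hAcard : A.card = m := by simp [hA]
  have hBcard : B.card = s - m := by
    rw [hB, Finset.card_compl, hAcard]; simp
  have hmemB : ∀ i : Fin s, i ∈ B ↔ ¬ (i : ℕ) < m := by
    intro i; rw [hB, Finset.mem_compl]; exact not_congr (hmemA i)
  have hjNotB : ∀ j : Fin m, e j ∉ B := by
    intro j h
    exact (hmemB (e j)).1 h j.2
  -- the inverse pair for the reindexing
  set TofS : Finset (Fin s) → Finset (Fin m) :=
    fun S => Finset.univ.filter (fun j : Fin m => e j ∈ S) with hTofS
  have hunion : ∀ S : Finset (Fin s), (TofS S).map e ∪ (S ∩ B) = S := by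
    intro S
    ext i
    simp only [Finset.mem_union, Finset.mem_map, Finset.mem_filter, Finset.mem_univ,
      true_and, Finset.mem_inter, hTofS]
    constructor
    · rintro (⟨j, hj, rfl⟩ | ⟨h, _⟩) <;> assumption
    · intro hiS
      by_cases h : (i : ℕ) < m
      · exact Or.inl ⟨⟨(i : ℕ), h⟩, by rwa [show e ⟨(i : ℕ), h⟩ = i from Fin.ext rfl], Fin.ext rfl⟩
      · exact Or.inr ⟨hiS, (hmemB i).2 h⟩
  have hre : (∑ S ∈ (Finset.univ : Finset (Fin s)).powerset,
        p ^ S.card * (1 - p) ^ (s - S.card) *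
          (if MvPolynomial.eval (fun i => if i ∈ S then (1 : ℝ) else 0) f = ℓ then 1 else 0))
      = ∑ x ∈ B.powerset ×ˢ (Finset.univ : Finset (Fin m)).powerset,
          (p ^ x.1.card * (1 - p) ^ ((s - m) - x.1.card)) *
            ((p ^ x.2.card * (1 - p) ^ (m - x.2.card)) *
              (if MvPolynomial.eval (fun i => if i ∈ x.2.map e ∪ x.1 then (1 : ℝ) else 0) f = ℓ
                then 1 else 0)) := by
    refine Finset.sum_nbij' (i := fun S => (S ∩ B, TofS S))
      (j := fun x => x.2.map e ∪ x.1) ?_ ?_ ?_ ?_ ?_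
    · intro S _
      exact Finset.mem_product.2 ⟨Finset.mem_powerset.2 Finset.inter_subset_right,
        Finset.mem_powerset.2 (Finset.subset_univ _)⟩
    · intro x _
      exact Finset.mem_powerset.2 (Finset.subset_univ _)
    · intro S _
      exact hunion S
    · intro x hx
      obtain ⟨hx1, _⟩ := Finset.mem_product.1 hx
      have hR : x.1 ⊆ B := Finset.mem_powerset.1 hx1
      have h1 : (x.2.map e ∪ x.1) ∩ B = x.1 := by
        rw [Finset.union_inter_distrib_right]
        have h2 : x.2.map e ∩ B = ∅ := by
          rw [Finset.eq_empty_iff_forall_notMem]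
          intro i hi
          obtain ⟨hi1, hi2⟩ := Finset.mem_inter.1 hi
          obtain ⟨j, _, rfl⟩ := Finset.mem_map.1 hi1
          exact hjNotB j hi2
        rw [h2, Finset.inter_eq_left.2 hR, Finset.empty_union]
      have h3 : TofS (x.2.map e ∪ x.1) = x.2 := by
        ext j
        simp only [hTofS, Finset.mem_filter, Finset.mem_univ, true_and, Finset.mem_union]
        constructor
        · rintro (h | h)
          · obtain ⟨j', hj', hj'e⟩ := Finset.mem_map.1 h
            rwa [← e.injective hj'e]
          · exact absurd (hR h) (hjNotB j)
        · intro h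
          exact Or.inl (Finset.mem_map_of_mem e h)
      exact Prod.ext h1 h3
    · intro S hS
      have hdisj : Disjoint ((TofS S).map e) (S ∩ B) := by
        rw [Finset.disjoint_left]
        intro i hi hiR
        obtain ⟨j, _, rfl⟩ := Finset.mem_map.1 hi
        exact hjNotB j (Finset.mem_inter.1 hiR).2
      have hcardS : S.card = (TofS S).card + (S ∩ B).card := by
        conv_lhs => rw [← hunion S]
        rw [Finset.card_union_of_disjoint hdisj, Finset.card_map]
      have hTle : (TofS S).card ≤ m := by
        simpa using Finset.card_le_univ (TofS S)
      have hRle : (S ∩ B).card ≤ s - m := by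
        rw [← hBcard]
        exact Finset.card_le_card Finset.inter_subset_right
      have hexp : s - ((TofS S).card + (S ∩ B).card)
          = (m - (TofS S).card) + ((s - m) - (S ∩ B).card) := by omega
      have hcond : (fun i => if i ∈ (TofS S).map e ∪ (S ∩ B) then (1 : ℝ) else 0)
          = (fun i => if i ∈ S then (1 : ℝ) else 0) := by
        rw [hunion S]
      simp only [hcond]
      rw [hcardS, hexp, pow_add, pow_add]
      ring
  rw [hre, Finset.sum_product]
  simp only [← Finset.mul_sum]
  have inner : ∀ R ∈ B.powerset,
      (∑ T ∈ (Finset.univ : Finset (Fin m)).powerset,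
        (p ^ T.card * (1 - p) ^ (m - T.card)) *
          (if MvPolynomial.eval (fun i => if i ∈ T.map e ∪ R then (1 : ℝ) else 0) f = ℓ
            then 1 else 0)) ≤ binmax m p := by
    intro R hRB
    have hR : R ⊆ B := Finset.mem_powerset.1 hRB
    set 𝒜 : Finset (Finset (Fin m)) := (Finset.univ : Finset (Fin m)).powerset.filter
      (fun T => MvPolynomial.eval (fun i => if i ∈ T.map e ∪ R then (1 : ℝ) else 0) f = ℓ)
      with h𝒜def
    have hsum : (∑ T ∈ (Finset.univ : Finset (Fin m)).powerset,
        (p ^ T.card * (1 - p) ^ (m - T.card)) *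
          (if MvPolynomial.eval (fun i => if i ∈ T.map e ∪ R then (1 : ℝ) else 0) f = ℓ
            then 1 else 0))
        = ∑ T ∈ 𝒜, p ^ T.card * (1 - p) ^ (m - T.card) := by
      rw [h𝒜def, Finset.sum_filter]
      refine Finset.sum_congr rfl fun T _ => ?_
      split <;> ring
    rw [hsum]
    refine weighted_lym m p hp hp1 𝒜 ?_
    intro T hT T' hT' hne hsub
    simp only [h𝒜def, Finset.coe_filter, Set.mem_setOf_eq] at hT hT'
    obtain ⟨j, hjT', hjT⟩ := Finset.exists_of_ssubset (lt_of_le_of_ne hsub hne)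
    have hlt := eval_strict_lt f hcoeff hlin
      (S := T.map e ∪ R) (S' := T'.map e ∪ R)
      (Finset.union_subset_union (Finset.map_subset_map.2 hsub) subset_rfl)
      (i := e j) j.2
      (Finset.mem_union_left _ (Finset.mem_map_of_mem e hjT'))
      (by
        rw [Finset.mem_union]
        rintro (h | h)
        · obtain ⟨j', hj', hj'e⟩ := Finset.mem_map.1 h
          exact hjT (by rwa [← e.injective hj'e])
        · exact hjNotB j (hR h))
    rw [hT.2, hT'.2] at hlt
    exact lt_irrefl _ hlt
  have houter : (∑ R ∈ B.powerset, p ^ R.card * (1 - p) ^ ((s - m) - R.card)) = 1 := by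
    have h := Finset.prod_add (fun _ : Fin s => p) (fun _ : Fin s => 1 - p) B
    simp only [Finset.prod_const] at h
    rw [show ((p : ℝ) + (1 - p)) = 1 by ring, one_pow] at h
    refine Eq.trans ?_ h.symm
    refine Finset.sum_congr rfl fun t ht => ?_
    rw [Finset.card_sdiff_of_subset (Finset.mem_powerset.1 ht), hBcard]
  calc (∑ R ∈ B.powerset, (p ^ R.card * (1 - p) ^ ((s - m) - R.card)) *
          ∑ T ∈ (Finset.univ : Finset (Fin m)).powerset,
            (p ^ T.card * (1 - p) ^ (m - T.card)) *
              (if MvPolynomial.eval (fun i => if i ∈ T.map e ∪ R then (1 : ℝ) else 0) f = ℓ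
                then 1 else 0))
      ≤ ∑ R ∈ B.powerset, (p ^ R.card * (1 - p) ^ ((s - m) - R.card)) * binmax m p := by
        refine Finset.sum_le_sum fun R hRB => ?_
        refine mul_le_mul_of_nonneg_left (inner R hRB) ?_
        positivity
    _ = (∑ R ∈ B.powerset, p ^ R.card * (1 - p) ^ ((s - m) - R.card)) * binmax m p := by
        rw [Finset.sum_mul]
    _ = binmax m p := by rw [houter, one_mul]
end

section
/- Let p = 0.388 and let ξ_1,…,ξ_s be independent Bernoulli(p) random variables. Then for any nonzero real numbers ℓ₁, ℓ₂, P[ξ_1 + ⋯ + ξ_s ∈ {ℓ₁, ℓ₂}] < 0.713. -/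
open Finset

private def bb (s k : ℕ) : ℝ := (s.choose k : ℝ) * 0.388 ^ k * 0.612 ^ (s - k)

lemma bb_nonneg (s k : ℕ) : 0 ≤ bb s k := by unfold bb; positivity

lemma bb_eq_zero {s k : ℕ} (h : s < k) : bb s k = 0 := by
  unfold bb; rw [Nat.choose_eq_zero_of_lt h]; norm_num

lemma bb_succ (s k : ℕ) (hk : 1 ≤ k) :
    bb (s + 1) k = 0.612 * bb s k + 0.388 * bb s (k - 1) := by
  obtain ⟨j, rfl⟩ : ∃ j, k = j + 1 := ⟨k - 1, by omega⟩
  unfold bb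
  rw [Nat.choose_succ_succ]
  push_cast
  rcases le_or_gt (j + 1) s with h | h
  · have h1 : s - j = (s - (j + 1)) + 1 := by omega
    rw [h1, pow_succ]
    ring
  · have hz : s.choose (j + 1) = 0 := Nat.choose_eq_zero_of_lt h
    rw [hz]
    push_cast
    ring

lemma bb4 (k : ℕ) : bb 4 k ≤ 0.3558 := by
  rcases le_or_gt k 4 with h | h
  · interval_cases k <;> norm_num [bb, Nat.choose]
  · rw [bb_eq_zero h]; norm_num

lemma bb_le_of_four_le {s : ℕ} (hs : 4 ≤ s) (k : ℕ) : bb s k ≤ 0.3558 := by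
  induction s, hs using Nat.le_induction generalizing k with
  | base => exact bb4 k
  | succ s hs ih =>
    rcases Nat.eq_zero_or_pos k with rfl | hk
    · have h : bb (s + 1) 0 = 0.612 * bb s 0 := by
        unfold bb; simp [pow_succ]; ring
      have := ih 0
      have := bb_nonneg s 0
      nlinarith
    · rw [bb_succ s k hk]
      have h1 := ih k
      have h2 := ih (k - 1)
      nlinarith [bb_nonneg s k, bb_nonneg s (k - 1)]

lemma key_single (s k : ℕ) (hk : 1 ≤ k) : bb s k ≤ 0.475 := by
  rcases le_or_gt 4 s with hs | hs
  · linarith [bb_le_of_four_le hs k]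
  · rcases le_or_gt k s with h | h
    · interval_cases s <;> interval_cases k <;> norm_num [bb, Nat.choose]
    · rw [bb_eq_zero h]; norm_num

lemma key_pair (s k₁ k₂ : ℕ) (h1 : 1 ≤ k₁) (h2 : 1 ≤ k₂) (hne : k₁ ≠ k₂) :
    bb s k₁ + bb s k₂ < 0.713 := by
  rcases le_or_gt 4 s with hs | hs
  · linarith [bb_le_of_four_le hs k₁, bb_le_of_four_le hs k₂]
  · rcases le_or_gt k₁ s with ha | ha
    · rcases le_or_gt k₂ s with hb | hb
      · interval_cases s <;> interval_cases k₁ <;> interval_cases k₂ <;>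
          first | omega | norm_num [bb, Nat.choose]
      · rw [bb_eq_zero hb]
        linarith [key_single s k₁ h1]
    · rw [bb_eq_zero ha]
      linarith [key_single s k₂ h2]

/-- for `p = 0.388` and independent Bernoulli(p) variables `ξ₁, …, ξ_s`, and any
nonzero reals `ℓ₁, ℓ₂`, we have `P[ξ₁ + ⋯ + ξ_s ∈ {ℓ₁, ℓ₂}] < 0.713`. -/
theorem two_layers (s : ℕ) (ℓ₁ ℓ₂ : ℝ) (h₁ : ℓ₁ ≠ 0) (h₂ : ℓ₂ ≠ 0) :
    ∑ S ∈ (Finset.univ : Finset (Fin s)).powerset,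
      (0.388 : ℝ) ^ S.card * (1 - 0.388) ^ (s - S.card) *
        (if (S.card : ℝ) = ℓ₁ ∨ (S.card : ℝ) = ℓ₂ then 1 else 0) < 0.713 := by
  have key : ∀ ℓ : ℝ, ℓ ≠ 0 → ∃ k : ℕ, 1 ≤ k ∧ ∀ m : ℕ, (m : ℝ) = ℓ → m = k := by
    intro ℓ hℓ
    by_cases h : ∃ n : ℕ, (n : ℝ) = ℓ
    · obtain ⟨n, hn⟩ := h
      refine ⟨n, ?_, fun m hm => Nat.cast_injective (hm.trans hn.symm)⟩
      rcases Nat.eq_zero_or_pos n with rfl | hp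
      · simp at hn; exact absurd hn.symm hℓ
      · exact hp
    · exact ⟨1, le_refl 1, fun m hm => absurd ⟨m, hm⟩ h⟩
  obtain ⟨a, ha, hua⟩ := key ℓ₁ h₁
  obtain ⟨b, hb, hub'⟩ := key ℓ₂ h₂
  obtain ⟨k₁, k₂, hk₁, hk₂, hkk, hu⟩ : ∃ k₁ k₂ : ℕ, 1 ≤ k₁ ∧ 1 ≤ k₂ ∧ k₁ ≠ k₂ ∧
      ∀ m : ℕ, ((m : ℝ) = ℓ₁ ∨ (m : ℝ) = ℓ₂) → m = k₁ ∨ m = k₂ := by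
    by_cases hab : a = b
    · exact ⟨a, a + 1, ha, by omega, by omega,
        fun m hm => Or.inl (hm.elim (hua m) (fun h => (hub' m h).trans hab.symm))⟩
    · exact ⟨a, b, ha, hb, hab, fun m hm => hm.imp (hua m) (hub' m)⟩
  rw [Finset.sum_powerset_apply_card
    (fun k => (0.388 : ℝ) ^ k * (1 - 0.388) ^ (s - k) *
      (if (k : ℝ) = ℓ₁ ∨ (k : ℝ) = ℓ₂ then 1 else 0))]
  simp only [Finset.card_univ, Fintype.card_fin, nsmul_eq_mul]
  have hub : ∀ m ∈ Finset.range (s + 1),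
      (s.choose m : ℝ) * ((0.388 : ℝ) ^ m * (1 - 0.388) ^ (s - m) *
        (if (m : ℝ) = ℓ₁ ∨ (m : ℝ) = ℓ₂ then 1 else 0)) ≤
      (if m = k₁ then bb s m else 0) + (if m = k₂ then bb s m else 0) := by
    intro m _
    by_cases hm : (m : ℝ) = ℓ₁ ∨ (m : ℝ) = ℓ₂
    · rw [if_pos hm]
      have hbb : (s.choose m : ℝ) * ((0.388 : ℝ) ^ m * (1 - 0.388) ^ (s - m) * 1) = bb s m := by
        unfold bb; norm_num; ring
      rw [hbb]
      rcases hu m hm with hm' | hm'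
      · rw [if_pos hm']
        have := bb_nonneg s m
        split_ifs <;> linarith
      · rw [if_pos hm']
        have := bb_nonneg s m
        split_ifs <;> linarith
    · rw [if_neg hm]
      have := bb_nonneg s m
      split_ifs <;> simp <;> linarith
  calc ∑ m ∈ Finset.range (s + 1), (s.choose m : ℝ) *
        ((0.388 : ℝ) ^ m * (1 - 0.388) ^ (s - m) *
          (if (m : ℝ) = ℓ₁ ∨ (m : ℝ) = ℓ₂ then 1 else 0))
      ≤ ∑ m ∈ Finset.range (s + 1),
          ((if m = k₁ then bb s m else 0) + (if m = k₂ then bb s m else 0)) :=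
        Finset.sum_le_sum hub
    _ = (if k₁ ∈ Finset.range (s + 1) then bb s k₁ else 0) +
        (if k₂ ∈ Finset.range (s + 1) then bb s k₂ else 0) := by
        rw [Finset.sum_add_distrib, Finset.sum_ite_eq' _ k₁ (bb s), Finset.sum_ite_eq' _ k₂ (bb s)]
    _ < 0.713 := by
        have := key_pair s k₁ k₂ hk₁ hk₂ hkk
        have n1 := bb_nonneg s k₁
        have n2 := bb_nonneg s k₂
        split_ifs <;> linarith
end

section
/- For every probability p ∈ (0,1) and integers 0 ≤ M ≤ N, C(N,M) p^M (1-p)^{N-M} ≤ M^M/(e^M M!) + p, where for M = 0 we interpret M^M/(e^M M!) = 1. -/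
open Finset

noncomputable def pa (l : ℝ) (k : ℕ) : ℝ := l ^ k / k.factorial
noncomputable def pF (l : ℝ) (i : ℕ) : ℝ := ∑ k ∈ range (i+1), pa l k
noncomputable def pG (l : ℝ) (i : ℕ) : ℝ := Real.exp l - pF l i

noncomputable def pv (l : ℝ) (M i : ℕ) : ℝ :=
  (if M ≤ i then Real.exp l else 0) - pF l i

noncomputable def pphi (l : ℝ) (M : ℕ) : ℕ → ℝ
  | 0 => 0
  | (i+1) => pa l M * i.factorial / l ^ (i+1) * pv l M i

-- normalization : pa l M * M! / l^M = 1
lemma pa_norm {l : ℝ} (hl : 0 < l) (M : ℕ) : pa l M * (M.factorial : ℝ) / l ^ M = 1 := by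
  unfold pa
  have h1 : (M.factorial : ℝ) ≠ 0 := by exact_mod_cast M.factorial_ne_zero
  field_simp

lemma pF_succ (l : ℝ) (i : ℕ) : pF l (i+1) = pF l i + pa l (i+1) := by
  unfold pF
  rw [Finset.sum_range_succ]

-- Stein identity
lemma stein_identity {l : ℝ} (hl : 0 < l) {M : ℕ} (hM : 1 ≤ M) (j : ℕ) :
    l * pphi l M (j+1) - (j:ℝ) * pphi l M j
      = (if j = M then Real.exp l else 0) - pa l M := by
  cases j with
  | zero =>
    simp only [pphi, Nat.cast_zero, zero_mul, sub_zero]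
    have hM0 : ¬ (M ≤ 0) := by omega
    have h0 : (0:ℕ) ≠ M := by omega
    simp only [pv, if_neg hM0, if_neg h0]
    unfold pF pa
    simp [Real.exp_ne_zero, hl.ne']
    field_simp
  | succ i =>
    have hfac : (Nat.factorial (i+1) : ℝ) = ((i:ℝ)+1) * (i.factorial : ℝ) := by
      rw [Nat.factorial_succ]; push_cast; ring
    have hlne : l ≠ 0 := hl.ne'
    have key : l * pphi l M (i+1+1) - ((i:ℝ)+1) * pphi l M (i+1)
        = pa l M * (Nat.factorial (i+1) : ℝ) / l ^ (i+1) * (pv l M (i+1) - pv l M i) := by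
      simp only [pphi]
      rw [hfac]
      field_simp
      ring
    have hv : pv l M (i+1) - pv l M i
        = (if i+1 = M then Real.exp l else 0) - pa l (i+1) := by
      unfold pv
      rw [pF_succ]
      rcases le_or_gt M i with h | h
      · have h1 : M ≤ i + 1 := by omega
        have h2 : ¬ (i+1 = M) := by omega
        simp [h, h1, h2]
      · rcases Nat.lt_or_ge i (M-1) with h' | h'
        · have h1 : ¬ (M ≤ i) := by omega
          have h2 : ¬ (M ≤ i+1) := by omega
          have h3 : ¬ (i+1 = M) := by omega
          simp [h1, h2, h3]
        · have h1 : ¬ (M ≤ i) := by omega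
          have h2 : M ≤ i+1 := by omega
          have h3 : i+1 = M := by omega
          simp [h1, h2, h3]
          ring
    push_cast
    rw [key, hv]
    have h3 : pa l (i+1) * ((Nat.factorial (i+1)):ℝ) = l ^ (i+1) := by
      have h2 := pa_norm hl (i+1)
      field_simp at h2
      linarith
    rcases eq_or_ne (i+1) M with h | h
    · subst h
      simp only [if_pos rfl]
      rw [pa_norm hl (i+1), one_mul]
    · simp only [if_neg h]
      rw [div_mul_eq_mul_div, div_eq_iff (pow_ne_zero _ hlne), ← h3]
      ring

-- paste earlier lemmas needed (from test2): pa_nonneg etc.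
lemma pa_nonneg {l : ℝ} (hl : 0 ≤ l) (k : ℕ) : 0 ≤ pa l k := by
  unfold pa; positivity

lemma summable_pa (l : ℝ) : Summable (pa l) := Real.summable_pow_div_factorial l

lemma tsum_pa (l : ℝ) : ∑' k, pa l k = Real.exp l := by
  rw [Real.exp_eq_exp_ℝ, NormedSpace.exp_eq_tsum_div]; rfl

lemma pa_succ_mul (l : ℝ) (k : ℕ) : ((k:ℝ)+1) * pa l (k+1) = l * pa l k := by
  unfold pa
  rw [Nat.factorial_succ, pow_succ]
  push_cast
  field_simp

lemma pF_nonneg {l : ℝ} (hl : 0 ≤ l) (i : ℕ) : 0 ≤ pF l i :=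
  Finset.sum_nonneg fun k _ => pa_nonneg hl k

lemma pG_eq_tsum (l : ℝ) (i : ℕ) : pG l i = ∑' m, pa l (m + (i+1)) := by
  have h := Summable.sum_add_tsum_nat_add (f := pa l) (i+1) (summable_pa l)
  unfold pG pF
  rw [tsum_pa] at h
  linarith [h]

lemma pG_nonneg {l : ℝ} (hl : 0 ≤ l) (i : ℕ) : 0 ≤ pG l i := by
  rw [pG_eq_tsum]
  exact tsum_nonneg fun m => pa_nonneg hl _

lemma key_tail {l : ℝ} (hl : 0 ≤ l) (i : ℕ) :
    ((i:ℝ)+1) * pG l (i+1) ≤ l * pG l i := by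
  rw [pG_eq_tsum l (i+1), pG_eq_tsum l i, ← tsum_mul_left, ← tsum_mul_left]
  have hs1 : Summable (fun m => ((i:ℝ)+1) * pa l (m + (i+1+1))) :=
    (Summable.mul_left _ ((summable_pa l).comp_injective (add_left_injective (i+1+1))))
  have hs2 : Summable (fun m => l * pa l (m + (i+1))) :=
    (Summable.mul_left _ ((summable_pa l).comp_injective (add_left_injective (i+1))))
  refine Summable.tsum_le_tsum (fun m => ?_) hs1 hs2
  calc ((i:ℝ)+1) * pa l (m + (i+1+1)) ≤ ((m + (i:ℝ)+1)+1) * pa l (m + (i+1+1)) := by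
        apply mul_le_mul_of_nonneg_right _ (pa_nonneg hl _)
        linarith [Nat.cast_nonneg (α := ℝ) m]
    _ = l * pa l (m + (i+1)) := by
        have : m + (i+1+1) = (m + (i+1)) + 1 := by ring
        rw [this]
        have h := pa_succ_mul l (m + (i+1))
        push_cast at h ⊢
        linarith [h]

lemma key_front {l : ℝ} (hl : 0 ≤ l) (i : ℕ) :
    l * pF l i ≤ ((i:ℝ)+1) * pF l (i+1) := by
  unfold pF
  rw [Finset.mul_sum, Finset.mul_sum]
  calc ∑ k ∈ range (i+1), l * pa l k
      = ∑ k ∈ range (i+1), ((k:ℝ)+1) * pa l (k+1) := by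
        refine Finset.sum_congr rfl fun k _ => (pa_succ_mul l k).symm
    _ ≤ ∑ k ∈ range (i+1), ((i:ℝ)+1) * pa l (k+1) := by
        refine Finset.sum_le_sum fun k hk => ?_
        have : (k:ℝ) ≤ i := by exact_mod_cast Nat.le_of_lt_succ (Finset.mem_range.mp hk)
        exact mul_le_mul_of_nonneg_right (by linarith) (pa_nonneg hl _)
    _ ≤ ∑ k ∈ range (i+2), ((i:ℝ)+1) * pa l k := by
        rw [Finset.sum_range_succ' (fun k => ((i:ℝ)+1) * pa l k) (i+1)]
        have : 0 ≤ ((i:ℝ)+1) * pa l 0 :=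
          mul_nonneg (by positivity) (pa_nonneg hl 0)
        linarith

-- B1: increments before M are nonpositive
lemma phi_anti_before {l : ℝ} (hl : 0 < l) {M i : ℕ} (h1 : 1 ≤ i) (h2 : i < M) :
    pphi l M (i+1) ≤ pphi l M i := by
  obtain ⟨j', rfl⟩ : ∃ j', i = j' + 1 := ⟨i - 1, by omega⟩
  have hphi1 : pphi l M (j'+1+1) = pa l M * ((j'+1).factorial : ℝ) / l ^ (j'+1+1) * (-(pF l (j'+1))) := by
    show pa l M * ((j'+1).factorial:ℝ) / l^(j'+1+1) * pv l M (j'+1) = _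
    unfold pv
    rw [if_neg (by omega)]
    ring_nf
  have hphi0 : pphi l M (j'+1) = pa l M * (j'.factorial : ℝ) / l ^ (j'+1) * (-(pF l j')) := by
    show pa l M * (j'.factorial:ℝ) / l^(j'+1) * pv l M j' = _
    unfold pv
    rw [if_neg (by omega)]
    ring_nf
  rw [hphi1, hphi0]
  have hfront := key_front hl.le j'
  have hfac : ((j'+1).factorial : ℝ) = ((j':ℝ)+1) * (j'.factorial:ℝ) := by
    rw [Nat.factorial_succ]; push_cast; ring
  have haM : 0 ≤ pa l M := pa_nonneg hl.le M
  have hlp : (0:ℝ) < l ^ (j'+1+1) := pow_pos hl _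
  have hlp' : (0:ℝ) < l ^ (j'+1) := pow_pos hl _
  rw [div_mul_eq_mul_div, div_mul_eq_mul_div, div_le_div_iff₀ hlp hlp']
  have hexp : l ^ (j'+1+1) = l ^ (j'+1) * l := by ring
  rw [hexp]
  have key : pa l M * (((j'+1).factorial:ℝ)) * (-(pF l (j'+1))) ≤
      pa l M * ((j'.factorial:ℝ)) * (-(pF l j')) * l := by
    rw [hfac]
    have hfac0 : (0:ℝ) ≤ (j'.factorial:ℝ) := by positivity
    nlinarith [hfront, mul_nonneg haM hfac0]
  calc pa l M * ↑(j' + 1).factorial * -pF l (j'+1) * l ^ (j'+1)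
      ≤ (pa l M * ↑j'.factorial * -pF l j' * l) * l ^ (j'+1) := by
        exact mul_le_mul_of_nonneg_right key hlp'.le
    _ = pa l M * ↑j'.factorial * -pF l j' * (l ^ (j'+1) * l) := by ring

-- B2: increments after M are nonpositive
lemma phi_anti_after {l : ℝ} (hl : 0 < l) {M i : ℕ} (h2 : M < i) :
    pphi l M (i+1) ≤ pphi l M i := by
  obtain ⟨j', rfl⟩ : ∃ j', i = j' + 1 := ⟨i - 1, by omega⟩
  have hphi1 : pphi l M (j'+1+1) = pa l M * ((j'+1).factorial : ℝ) / l ^ (j'+1+1) * (pG l (j'+1)) := by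
    show pa l M * ((j'+1).factorial:ℝ) / l^(j'+1+1) * pv l M (j'+1) = _
    unfold pv pG
    rw [if_pos (by omega)]
  have hphi0 : pphi l M (j'+1) = pa l M * (j'.factorial : ℝ) / l ^ (j'+1) * (pG l j') := by
    show pa l M * (j'.factorial:ℝ) / l^(j'+1) * pv l M j' = _
    unfold pv pG
    rw [if_pos (by omega)]
  rw [hphi1, hphi0]
  have htail := key_tail hl.le j'
  have hfac : ((j'+1).factorial : ℝ) = ((j':ℝ)+1) * (j'.factorial:ℝ) := by
    rw [Nat.factorial_succ]; push_cast; ring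
  have haM : 0 ≤ pa l M := pa_nonneg hl.le M
  have hlp : (0:ℝ) < l ^ (j'+1+1) := pow_pos hl _
  have hlp' : (0:ℝ) < l ^ (j'+1) := pow_pos hl _
  rw [div_mul_eq_mul_div, div_mul_eq_mul_div, div_le_div_iff₀ hlp hlp']
  have hexp : l ^ (j'+1+1) = l ^ (j'+1) * l := by ring
  rw [hexp]
  have key : pa l M * (((j'+1).factorial:ℝ)) * (pG l (j'+1)) ≤
      pa l M * ((j'.factorial:ℝ)) * (pG l j') * l := by
    rw [hfac]
    have hfac0 : (0:ℝ) ≤ (j'.factorial:ℝ) := by positivity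
    nlinarith [htail, mul_nonneg haM hfac0]
  calc pa l M * ↑(j' + 1).factorial * pG l (j'+1) * l ^ (j'+1)
      ≤ (pa l M * ↑j'.factorial * pG l j' * l) * l ^ (j'+1) := by
        exact mul_le_mul_of_nonneg_right key hlp'.le
    _ = pa l M * ↑j'.factorial * pG l j' * (l ^ (j'+1) * l) := by ring

-- B3: the peak increment is between 0 and exp l / l
lemma phi_peak_pos {l : ℝ} (hl : 0 < l) {M : ℕ} (hM : 1 ≤ M) :
    0 ≤ pphi l M (M+1) - pphi l M M := by
  obtain ⟨m, rfl⟩ : ∃ m, M = m + 1 := ⟨M - 1, by omega⟩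
  have h1 : pphi l (m+1) (m+1+1) = pa l (m+1) * ((m+1).factorial : ℝ) / l ^ (m+1+1) * (pG l (m+1)) := by
    show pa l (m+1) * ((m+1).factorial:ℝ) / l^(m+1+1) * pv l (m+1) (m+1) = _
    unfold pv pG
    rw [if_pos (le_refl _)]
  have h0 : pphi l (m+1) (m+1) = pa l (m+1) * (m.factorial : ℝ) / l ^ (m+1) * (-(pF l m)) := by
    show pa l (m+1) * (m.factorial:ℝ) / l^(m+1) * pv l (m+1) m = _
    unfold pv
    rw [if_neg (by omega)]
    ring_nf
  rw [h1, h0]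
  have t1 : 0 ≤ pa l (m+1) * ((m+1).factorial : ℝ) / l ^ (m+1+1) * (pG l (m+1)) := by
    have := pG_nonneg hl.le (m+1)
    have := pa_nonneg hl.le (m+1)
    have : (0:ℝ) < l ^ (m+1+1) := pow_pos hl _
    positivity
  have t2 : pa l (m+1) * (m.factorial : ℝ) / l ^ (m+1) * (-(pF l m)) ≤ 0 := by
    have h3 := pF_nonneg hl.le m
    have h4 : 0 ≤ pa l (m+1) * (m.factorial : ℝ) / l ^ (m+1) := by
      have := pa_nonneg hl.le (m+1)
      have : (0:ℝ) < l ^ (m+1) := pow_pos hl _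
      positivity
    nlinarith
  linarith

lemma phi_peak_le {l : ℝ} (hl : 0 < l) {M : ℕ} (hM : 1 ≤ M) :
    pphi l M (M+1) - pphi l M M ≤ Real.exp l / l := by
  obtain ⟨m, rfl⟩ : ∃ m, M = m + 1 := ⟨M - 1, by omega⟩
  have h1 : pphi l (m+1) (m+1+1) = pa l (m+1) * ((m+1).factorial : ℝ) / l ^ (m+1+1) * (pG l (m+1)) := by
    show pa l (m+1) * ((m+1).factorial:ℝ) / l^(m+1+1) * pv l (m+1) (m+1) = _
    unfold pv pG
    rw [if_pos (le_refl _)]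
  have h0 : pphi l (m+1) (m+1) = pa l (m+1) * (m.factorial : ℝ) / l ^ (m+1) * (-(pF l m)) := by
    show pa l (m+1) * (m.factorial:ℝ) / l^(m+1) * pv l (m+1) m = _
    unfold pv
    rw [if_neg (by omega)]
    ring_nf
  rw [h1, h0]
  have hnorm : pa l (m+1) * ((m+1).factorial : ℝ) / l ^ (m+1) = 1 := pa_norm hl (m+1)
  have hfac : ((m+1).factorial : ℝ) = ((m:ℝ)+1) * (m.factorial:ℝ) := by
    rw [Nat.factorial_succ]; push_cast; ring
  have hm1 : (0:ℝ) < (m:ℝ)+1 := by positivity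
  have key1 : pa l (m+1) * ((m+1).factorial:ℝ) / l ^ (m+1+1) = 1/l := by
    rw [pow_succ, ← div_div, hnorm]
  have key2 : pa l (m+1) * ((m.factorial):ℝ) / l ^ (m+1) = 1/((m:ℝ)+1) := by
    have h := hnorm
    rw [hfac] at h
    rw [eq_div_iff hm1.ne']
    linear_combination h
  rw [key1, key2]
  have hfront := key_front hl.le m
  have hGF : pG l (m+1) + pF l (m+1) = Real.exp l := by unfold pG; ring
  have step : (1/((m:ℝ)+1)) * pF l m ≤ (1/l) * pF l (m+1) := by
    rw [div_mul_eq_mul_div, div_mul_eq_mul_div, div_le_div_iff₀ hm1 hl]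
    nlinarith [hfront]
  have expand : (1/l) * pG l (m+1) + (1/l) * pF l (m+1) = Real.exp l / l := by
    rw [← mul_add, hGF]
    ring
  nlinarith [step, expand]

/-- for every `p ∈ (0,1)` and integers `0 ≤ M ≤ N`,
`C(N,M) p^M (1-p)^{N-M} ≤ M^M/(e^M M!) + p` (with `0^0 = 1` for `M = 0`). -/
theorem binomial_le_poisson_max_add_p (p : ℝ) (hp : 0 < p) (hp1 : p < 1)
    (M N : ℕ) (hMN : M ≤ N) :
    (N.choose M : ℝ) * p ^ M * (1 - p) ^ (N - M) ≤
      (M : ℝ) ^ M / (Real.exp M * (Nat.factorial M)) + p := by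
  rcases Nat.eq_zero_or_pos M with hM0 | hM
  · subst hM0
    simp only [Nat.choose_zero_right, Nat.cast_one, pow_zero, one_mul, Nat.cast_zero,
      Real.exp_zero, Nat.factorial_zero, Nat.sub_zero]
    have h1 : (1 - p) ^ N ≤ 1 := pow_le_one₀ (by linarith) (by linarith)
    norm_num
    linarith
  -- main case M ≥ 1
  obtain ⟨n, rfl⟩ : ∃ n, N = n + 1 := ⟨N - 1, by omega⟩
  set q : ℝ := 1 - p with hq
  have hq0 : 0 < q := by simp [hq]; linarith
  set l : ℝ := ((n:ℝ) + 1) * p with hl_def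
  have hl : 0 < l := by positivity
  set E : ℝ := Real.exp l with hE
  have hEpos : 0 < E := Real.exp_pos l
  set b : ℕ → ℝ := fun j => (Nat.choose (n+1) j : ℝ) * p ^ j * q ^ (n+1-j) with hb
  set b' : ℕ → ℝ := fun j => (Nat.choose n j : ℝ) * p ^ j * q ^ (n-j) with hb'
  have hb'nonneg : ∀ j, 0 ≤ b' j := fun j => by
    simp only [hb']; positivity
  have hpq : p + q = 1 := by simp [hq]
  have hsum_b : ∑ j ∈ range (n+2), b j = 1 := by
    calc ∑ j ∈ range (n+2), b j
        = ∑ j ∈ range (n+1+1), p ^ j * q ^ (n+1-j) * ((n+1).choose j : ℝ) :=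
          Finset.sum_congr rfl (fun j _ => by simp only [hb]; ring)
      _ = (p + q) ^ (n+1) := (add_pow p q (n+1)).symm
      _ = 1 := by rw [hpq, one_pow]
  have hsum_b' : ∑ j ∈ range (n+1), b' j = 1 := by
    calc ∑ j ∈ range (n+1), b' j
        = ∑ j ∈ range (n+1), p ^ j * q ^ (n-j) * (n.choose j : ℝ) :=
          Finset.sum_congr rfl (fun j _ => by simp only [hb']; ring)
      _ = (p + q) ^ n := (add_pow p q n).symm
      _ = 1 := by rw [hpq, one_pow]
  have hb'le1 : ∀ j ∈ range (n+1), b' j ≤ 1 := by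
    intro j hj
    rw [← hsum_b']
    exact Finset.single_le_sum (fun k _ => hb'nonneg k) hj
  -- Step C : LHS of Stein sum
  have stepC : ∑ j ∈ range (n+2), b j * (l * pphi l M (j+1) - (j:ℝ) * pphi l M j)
      = b M * E - pa l M := by
    have h1 : ∀ j ∈ range (n+2), b j * (l * pphi l M (j+1) - (j:ℝ) * pphi l M j)
        = (if j = M then b j * E else 0) - pa l M * b j := by
      intro j _
      rw [stein_identity hl hM j]
      rcases eq_or_ne j M with h | h <;> simp [h] <;> ring
    rw [Finset.sum_congr rfl h1, Finset.sum_sub_distrib, Finset.sum_ite_eq' (range (n+2)) M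
      (fun j => b j * E), if_pos (by simp; omega), ← Finset.mul_sum, hsum_b, mul_one]
  -- Step B : rewrite as telescoping against b'
  have claim2a : ∀ i ∈ range (n+1), ((i:ℝ)+1) * b (i+1) * pphi l M (i+1)
      = l * (b' i * pphi l M (i+1)) := by
    intro i hi
    have hch : ((n:ℕ)+1) * Nat.choose n i = Nat.choose (n+1) (i+1) * (i+1) :=
      Nat.add_one_mul_choose_eq n i
    have hch' : (((n+1) : ℝ)) * (Nat.choose n i : ℝ) = (Nat.choose (n+1) (i+1) : ℝ) * ((i:ℝ)+1) := by
      exact_mod_cast hch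
    have hsub : n + 1 - (i+1) = n - i := by omega
    simp only [hb, hb', hsub, pow_succ]
    rw [hl_def]
    linear_combination (-(p ^ i * p * q ^ (n - i) * pphi ((↑n + 1) * p) M (i + 1))) * hch'
  have claim2b : ∀ i ∈ range (n+1), b (i+1) = q * b' (i+1) + p * b' i := by
    intro i hi
    have hmem : i < n + 1 := Finset.mem_range.mp hi
    have hch : Nat.choose (n+1) (i+1) = Nat.choose n i + Nat.choose n (i+1) :=
      Nat.choose_succ_succ n i
    have hsub : n + 1 - (i+1) = n - i := by omega
    simp only [hb, hb', hch, hsub]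
    push_cast
    rcases Nat.lt_or_ge i n with h | h
    · have hsub2 : n - i = (n - (i+1)) + 1 := by omega
      rw [hsub2, pow_succ, pow_succ]
      ring
    · have hin : i = n := by omega
      subst hin
      simp only [Nat.choose_succ_self, Nat.cast_zero, Nat.sub_self, pow_zero,
        show i - (i+1) = 0 from by omega]
      ring
  have stepB : ∑ j ∈ range (n+2), b j * (l * pphi l M (j+1) - (j:ℝ) * pphi l M j)
      = l * p * ∑ j ∈ range (n+1), b' j * (pphi l M (j+2) - pphi l M (j+1)) := by
    have expand : ∑ j ∈ range (n+2), b j * (l * pphi l M (j+1) - (j:ℝ) * pphi l M j)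
        = l * (∑ j ∈ range (n+2), b j * pphi l M (j+1))
          - ∑ j ∈ range (n+2), (j:ℝ) * b j * pphi l M j := by
      rw [Finset.mul_sum, ← Finset.sum_sub_distrib]
      exact Finset.sum_congr rfl fun j _ => by ring
    have hT2 : ∑ j ∈ range (n+2), (j:ℝ) * b j * pphi l M j
        = l * ∑ i ∈ range (n+1), b' i * pphi l M (i+1) := by
      rw [Finset.sum_range_succ' (fun j => (j:ℝ) * b j * pphi l M j) (n+1)]
      simp only [Nat.cast_zero, zero_mul]
      rw [Finset.mul_sum, add_zero]
      refine Finset.sum_congr rfl fun i hi => ?_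
      have h := claim2a i hi
      push_cast
      push_cast at h
      linarith [h]
    have hshift : ∑ i ∈ range (n+1), b' (i+1) * pphi l M (i+2)
        = ∑ j ∈ range (n+1), b' j * pphi l M (j+1) - b' 0 * pphi l M 1 := by
      have h := Finset.sum_range_succ' (fun j => b' j * pphi l M (j+1)) (n+1)
      have hzero : b' (n+1) = 0 := by
        simp [hb', Nat.choose_succ_self]
      rw [Finset.sum_range_succ] at h
      rw [hzero] at h
      simp only [zero_mul, add_zero] at h
      linarith [h]
    have hb0 : b 0 = q * b' 0 := by
      simp only [hb, hb', Nat.choose_zero_right, Nat.cast_one, pow_zero, Nat.sub_zero,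
        one_mul, mul_one, pow_succ]
      ring
    have hT1 : ∑ j ∈ range (n+2), b j * pphi l M (j+1)
        = q * ∑ j ∈ range (n+1), b' j * pphi l M (j+1)
          + p * ∑ j ∈ range (n+1), b' j * pphi l M (j+2) := by
      rw [Finset.sum_range_succ' (fun j => b j * pphi l M (j+1)) (n+1)]
      have hmid : ∑ i ∈ range (n+1), b (i+1) * pphi l M (i+1+1)
          = q * (∑ i ∈ range (n+1), b' (i+1) * pphi l M (i+2))
            + p * ∑ i ∈ range (n+1), b' i * pphi l M (i+2) := by
        rw [Finset.mul_sum, Finset.mul_sum, ← Finset.sum_add_distrib]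
        refine Finset.sum_congr rfl fun i hi => ?_
        rw [claim2b i hi]
        ring
      rw [hmid, hshift, hb0]
      ring
    rw [expand, hT1, hT2]
    have hS : ∑ j ∈ range (n+1), b' j * (pphi l M (j+2) - pphi l M (j+1))
        = (∑ j ∈ range (n+1), b' j * pphi l M (j+2))
          - ∑ j ∈ range (n+1), b' j * pphi l M (j+1) := by
      rw [← Finset.sum_sub_distrib]
      exact Finset.sum_congr rfl fun j _ => by ring
    rw [hS, hq]
    ring
  -- Step D : bound the telescoping sum
  have stepD : ∑ j ∈ range (n+1), b' j * (pphi l M (j+2) - pphi l M (j+1)) ≤ E / l := by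
    have hbound : ∀ j ∈ range (n+1), b' j * (pphi l M (j+2) - pphi l M (j+1))
        ≤ (if j = M - 1 then E / l else 0) := by
      intro j hj
      rcases eq_or_ne j (M-1) with h | h
      · subst h
        rw [if_pos rfl]
        have hM1 : M - 1 + 1 = M := by omega
        have hM2 : M - 1 + 2 = M + 1 := by omega
        rw [hM1, hM2]
        have hpos := phi_peak_pos hl hM
        have hle := phi_peak_le hl hM
        have hb'1 := hb'le1 (M-1) hj
        have hb'0 := hb'nonneg (M-1)
        nlinarith
      · rw [if_neg h]
        have hdelta : pphi l M (j+2) ≤ pphi l M (j+1) := by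
          rcases Nat.lt_or_ge (j+1) M with hlt | hge
          · exact phi_anti_before hl (by omega) (by omega)
          · exact phi_anti_after hl (by omega)
        have := hb'nonneg j
        nlinarith
    calc ∑ j ∈ range (n+1), b' j * (pphi l M (j+2) - pphi l M (j+1))
        ≤ ∑ j ∈ range (n+1), (if j = M - 1 then E / l else 0) :=
          Finset.sum_le_sum hbound
      _ = E / l := by
          rw [Finset.sum_ite_eq' (range (n+1)) (M-1) (fun _ => E / l)]
          rw [if_pos (by simp; omega)]
  -- combine
  have main : b M * E - pa l M ≤ p * E := by
    rw [stepC.symm.trans stepB]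
    calc l * p * ∑ j ∈ range (n+1), b' j * (pphi l M (j+2) - pphi l M (j+1))
        ≤ l * p * (E / l) := by
          apply mul_le_mul_of_nonneg_left stepD (by positivity)
      _ = p * E := by
          field_simp
  have hbM : b M ≤ pa l M / E + p := by
    have h2 : b M * E ≤ (pa l M / E + p) * E := by
      have h3 : (pa l M / E + p) * E = pa l M + p * E := by
        field_simp
      rw [h3]
      linarith [main]
    exact le_of_mul_le_mul_right h2 hEpos
  -- final : pa l M / E ≤ M^M / (exp M * M!)
  have hfinal : pa l M / E ≤ (M:ℝ)^M / (Real.exp M * (Nat.factorial M)) := by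
    have hMpos : (0:ℝ) < M := by exact_mod_cast hM
    have hcore : l ^ M * Real.exp M ≤ (M:ℝ)^M * Real.exp l := by
      have h1 : l / M ≤ Real.exp (l / M - 1) := by
        have := Real.add_one_le_exp (l / M - 1)
        linarith
      have h2 : (l / M) ^ M ≤ (Real.exp (l / M - 1)) ^ M :=
        pow_le_pow_left₀ (by positivity) h1 M
      rw [← Real.exp_nat_mul] at h2
      have h3 : (M:ℝ) * (l / M - 1) = l - M := by
        field_simp
      rw [h3, Real.exp_sub] at h2
      rw [div_pow] at h2
      have h5 : (0:ℝ) < (M:ℝ)^M := by positivity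
      have h6 : (0:ℝ) < Real.exp M := Real.exp_pos _
      rw [div_le_div_iff₀ h5 h6] at h2
      linarith
    unfold pa
    rw [hE, div_le_div_iff₀ (by positivity) (by positivity)]
    have hfc : (0:ℝ) < (Nat.factorial M : ℝ) := by exact_mod_cast M.factorial_pos
    have heq : l ^ M / (Nat.factorial M : ℝ) * (Real.exp M * (Nat.factorial M:ℝ))
        = l ^ M * Real.exp M := by
      field_simp
    rw [heq]
    calc l ^ M * Real.exp M ≤ (M:ℝ)^M * Real.exp l := hcore
      _ = (M:ℝ)^M * Real.exp l := rfl
  calc ((n+1).choose M : ℝ) * p ^ M * (1 - p) ^ (n + 1 - M) = b M := by simp only [hb, hq]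
    _ ≤ pa l M / E + p := hbM
    _ ≤ (M:ℝ)^M / (Real.exp M * (Nat.factorial M)) + p := by linarith [hfinal]
end

section
/- Let m ≥ 1 and let g be a multilinear quadratic polynomial in s variables x₁,…,x_s with all coefficients in {0,1} and no constant term. Suppose that for every i ∈ [s], the polynomial g_i obtained from g by substituting x_i = 1 has fewer than m nonzero linear terms. Suppose further that for every variable x_j not appearing in a linear term of g, there is some variable x_i appearing in a linear term of g such that the monomial x_i x_j appears in g. Then s ≤ (m+1)²/4. -/
open Finset

/-- a multilinear quadratic polynomial `g` with `{0,1}` coefficients and no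
constant term is encoded by the set `L` of variables with a linear term and a simple graph `G`
recording the quadratic monomials. If for every `i` the substitution `x_i = 1` produces fewer
than `m` nonzero linear terms (i.e. `|(L \ {i}) ∪ N_G(i)| < m`), and every variable outside
`L` has a quadratic neighbour in `L`, then the number of variables `s` is at most `(m+1)²/4`. -/
theorem Gm_is_small (s m : ℕ) (hm : 1 ≤ m)
    (L : Finset (Fin s)) (G : SimpleGraph (Fin s)) [DecidableRel G.Adj]
    (hsub : ∀ i : Fin s, ((L.erase i) ∪ G.neighborFinset i).card < m)
    (hQ : ∀ j : Fin s, j ∉ L → ∃ i ∈ L, G.Adj i j) :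
    (s : ℝ) ≤ ((m : ℝ) + 1) ^ 2 / 4 := by
  classical
  set l := L.card with hl
  have key : ∀ i ∈ L, ((G.neighborFinset i) \ L).card + l ≤ m := by
    intro i hi
    have hdisj : Disjoint ((G.neighborFinset i) \ L) (L.erase i) :=
      Finset.disjoint_left.mpr
        (fun a ha hb => (Finset.mem_sdiff.mp ha).2 (Finset.mem_of_mem_erase hb))
    have hsubset : ((G.neighborFinset i) \ L) ∪ (L.erase i) ⊆ (L.erase i) ∪ G.neighborFinset i := by
      intro a ha
      rcases Finset.mem_union.mp ha with h | h
      · exact Finset.mem_union.mpr (Or.inr (Finset.mem_sdiff.mp h).1)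
      · exact Finset.mem_union.mpr (Or.inl h)
    have h1 := Finset.card_le_card hsubset
    rw [Finset.card_union_of_disjoint hdisj] at h1
    have h2 : (L.erase i).card = l - 1 := Finset.card_erase_of_mem hi
    have h3 : 1 ≤ l := Finset.card_pos.mpr ⟨i, hi⟩
    have h4 := hsub i
    omega
  have hLm : l ≤ m := by
    rcases L.eq_empty_or_nonempty with hE | ⟨i, hi⟩
    · simp [hl, hE]
    · have := key i hi; omega
  have hcover : Finset.univ \ L ⊆ L.biUnion (fun i => (G.neighborFinset i) \ L) := by
    intro j hj
    have hjL : j ∉ L := (Finset.mem_sdiff.mp hj).2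
    obtain ⟨i, hiL, hadj⟩ := hQ j hjL
    exact Finset.mem_biUnion.mpr ⟨i, hiL, Finset.mem_sdiff.mpr
      ⟨(SimpleGraph.mem_neighborFinset _ _ _).mpr hadj, hjL⟩⟩
  have hcard : (Finset.univ \ L).card ≤ l * (m - l) := by
    calc (Finset.univ \ L).card ≤ (L.biUnion (fun i => (G.neighborFinset i) \ L)).card :=
          Finset.card_le_card hcover
      _ ≤ ∑ i ∈ L, ((G.neighborFinset i) \ L).card := Finset.card_biUnion_le
      _ ≤ ∑ _i ∈ L, (m - l) := Finset.sum_le_sum (fun i hi => by have := key i hi; omega)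
      _ = l * (m - l) := by rw [Finset.sum_const, smul_eq_mul]
  have hsl : l ≤ s := by
    have := Finset.card_le_card (Finset.subset_univ L)
    simpa using this
  have hsd : (Finset.univ \ L).card = s - l := by
    rw [Finset.card_sdiff_of_subset (Finset.subset_univ L)]
    simp [hl]
  have hs : s ≤ l + l * (m - l) := by
    set K := l * (m - l) with hK
    rw [hsd] at hcard
    omega
  have hreal : (s : ℝ) ≤ (l : ℝ) * ((m : ℝ) + 1 - l) := by
    have hcast : ((m - l : ℕ) : ℝ) = (m : ℝ) - l := by
      rw [Nat.cast_sub hLm]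
    have := (Nat.cast_le (α := ℝ)).mpr hs
    push_cast at this
    rw [hcast] at this
    nlinarith
  have hlm : (l : ℝ) ≤ m := by exact_mod_cast hLm
  nlinarith [sq_nonneg ((l : ℝ) - ((m : ℝ) + 1) / 2)]
end
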